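/- Let R be a finite ring with unity and let x ∈ R. Then |[x]_ℓ| = Σ_{I a left ideal of R with I ⊆ (x)_ℓ} |I| · μ_R(I,(x)_ℓ). -/

import Mathlib

open scoped BigOperators
open Classical

variable {R : Type*}

/-- The left ideal of `R` generated by `x`, i.e. `(x)_ℓ`. -/
def lgen [Ring R] (x : R) : Submodule R R := Submodule.span R {x}

/-- `[x]_ℓ = {y : (y)_ℓ = (x)_ℓ}`. -/
def classL [Ring R] (x : R) : Set R := {y | lgen y = lgen x}

/-- The character sum `C_χ(x) = ∑_{s ∈ [x]_ℓ} χ(s)`. -/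
noncomputable def CchiL [Ring R] (χ : AddChar R ℂ) (x : R) : ℂ :=
  ∑ᶠ s ∈ classL x, χ s

/-- The set `M_R(J)` of maximal `R`-left ideals of `J`. -/
def maxROf [Ring R] (J : Submodule R R) : Set (Submodule R R) :=
  {M | M < J ∧ ∀ I' : Submodule R R, M < I' → ¬ I' < J}

/-- The set `M_R(J, K)` of maximal `R`-left ideals of `J` containing `K`. -/
def maxROfAbove [Ring R] (J K : Submodule R R) : Set (Submodule R R) :=
  {M | M ∈ maxROf J ∧ K ≤ M}

/-- Intersection of the family `E` of left ideals, with the convention that the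
empty intersection is `J`. -/
noncomputable def interIn [Ring R] (J : Submodule R R) (E : Set (Submodule R R)) :
    Submodule R R :=
  if E = ∅ then J else sInf E

/-- The Möbius function `μ_R(I, J)` on left ideals of `R`. -/
noncomputable def muR [Ring R] (I J : Submodule R R) : ℤ :=
  if I = J then 1
  else if I < J ∧ ∃ E : Set (Submodule R R),
      E ⊆ maxROf J ∧ E.Nonempty ∧ interIn J E = I then
    (Nat.card {E : Set (Submodule R R) //
        E ⊆ maxROf J ∧ interIn J E = I ∧ Even (Nat.card E)} : ℤ)
      - (Nat.card {E : Set (Submodule R R) //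
        E ⊆ maxROf J ∧ interIn J E = I ∧ Odd (Nat.card E)} : ℤ)
  else 0

/-- The function `φ_R(I, J)` on left ideals of `R`. -/
noncomputable def phiR [Ring R] (I J : Submodule R R) : ℂ :=
  if I = J then 1
  else if I < J ∧ ∃ E : Set (Submodule R R),
      E ⊆ maxROf J ∧ E.Nonempty ∧ interIn J E = I then
    ∏ᶠ M ∈ maxROfAbove J I, ((Nat.card J : ℂ) / (Nat.card M : ℂ) - 1)
  else 1



set_option linter.unusedSectionVars false

section Aux

variable [Ring R] [Fintype R]

noncomputable instance : Fintype (Submodule R R) :=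
  Fintype.ofInjective (SetLike.coe) SetLike.coe_injective

lemma classL_eq (x : R) :
    classL x = {y | y ∈ lgen x ∧ ∀ M ∈ maxROf (lgen x), y ∉ M} := by
  ext y
  constructor
  · intro hy
    have hy' : lgen y = lgen x := hy
    constructor
    · rw [← hy']; exact Submodule.mem_span_singleton_self y
    · intro M hM hyM
      have h1 : lgen y ≤ M := (Submodule.span_singleton_le_iff_mem _ _).2 hyM
      rw [hy'] at h1
      exact (show M < lgen x from hM.1).not_ge h1
  · rintro ⟨hyJ, hM⟩
    have hle : lgen y ≤ lgen x := (Submodule.span_singleton_le_iff_mem _ _).2 hyJ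
    by_contra hne
    have hlt : lgen y < lgen x := lt_of_le_of_ne hle hne
    set s : Set (Submodule R R) := {I | lgen y ≤ I ∧ I < lgen x} with hs
    have hfin : s.Finite := Set.toFinite s
    have hne' : s.Nonempty := ⟨lgen y, le_rfl, hlt⟩
    obtain ⟨M, hMs, hmax⟩ := Set.Finite.exists_maximalFor id s hfin hne'
    have hMmax : M ∈ maxROf (lgen x) := by
      refine ⟨hMs.2, fun I' h1 h2 => ?_⟩
      have : I' ∈ s := ⟨le_trans hMs.1 h1.le, h2⟩
      exact h1.ne (le_antisymm h1.le (hmax this h1.le))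
    exact hM M hMmax (hMs.1 (Submodule.mem_span_singleton_self y))

lemma mem_interIn {J : Submodule R R} {E : Set (Submodule R R)} (hE : E ⊆ maxROf J) {y : R} :
    y ∈ interIn J E ↔ y ∈ J ∧ ∀ M ∈ E, y ∈ M := by
  unfold interIn
  split_ifs with h
  · subst h; simp
  · rw [Submodule.mem_sInf]
    constructor
    · intro hy
      obtain ⟨M, hM⟩ := Set.nonempty_iff_ne_empty.2 h
      exact ⟨(hE hM).1.le (hy M hM), hy⟩
    · exact fun h p hp => h.2 p hp

lemma interIn_lt {J : Submodule R R} {E : Set (Submodule R R)} (hE : E ⊆ maxROf J)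
    (hne : E.Nonempty) : interIn J E < J := by
  obtain ⟨M, hM⟩ := hne
  have h1 : interIn J E ≤ M := by
    unfold interIn
    rw [if_neg (Set.nonempty_iff_ne_empty.1 ⟨M, hM⟩)]
    exact sInf_le hM
  exact lt_of_le_of_lt h1 (hE hM).1

lemma card_subsets (𝓜 : Finset (Submodule R R)) (Q : Set (Submodule R R) → Prop) :
    Nat.card {E : Set (Submodule R R) // E ⊆ ↑𝓜 ∧ Q E} =
      (𝓜.powerset.filter (fun F : Finset (Submodule R R) => Q ↑F)).card := by
  have e : {E : Set (Submodule R R) // E ⊆ ↑𝓜 ∧ Q E} ≃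
      {F : Finset (Submodule R R) // F ∈ 𝓜.powerset.filter (fun F : Finset (Submodule R R) => Q ↑F)} :=
    { toFun := fun E => ⟨E.1.toFinset, by
        have h := E.2
        rw [Finset.mem_filter, Finset.mem_powerset, Set.coe_toFinset]
        exact ⟨Set.toFinset_subset.2 h.1, h.2⟩⟩
      invFun := fun F => ⟨(↑F.1 : Set (Submodule R R)), by
        have h := F.2
        rw [Finset.mem_filter, Finset.mem_powerset] at h
        exact ⟨Finset.coe_subset.2 h.1, h.2⟩⟩
      left_inv := by rintro ⟨E, hE⟩; simp [Set.coe_toFinset]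
      right_inv := by rintro ⟨F, hF⟩; simp }
  rw [Nat.card_congr e, Nat.card_eq_finsetCard]

end Aux


theorem stmt9 [Ring R] [Fintype R] (x : R) :
    (Nat.card (classL x) : ℤ) =
      ∑ᶠ I ∈ {I : Submodule R R | I ≤ lgen x},
        (Nat.card I : ℤ) * muR I (lgen x) := by
  classical
  set J := lgen x with hJ
  set 𝓜 : Finset (Submodule R R) := Set.toFinset (maxROf J) with h𝓜
  have h𝓜coe : (↑𝓜 : Set (Submodule R R)) = maxROf J := Set.coe_toFinset _
  set c : Submodule R R → ℤ := fun I => ((I : Set R).toFinset.card : ℤ) with hc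
  have hcard : ∀ I : Submodule R R, (Nat.card I : ℤ) = c I := by
    intro I
    rw [hc]
    norm_cast
    rw [← SetLike.coe_sort_coe, Nat.card_eq_card_toFinset]
  set JF : Finset R := (J : Set R).toFinset with hJF
  -- membership in finset powerset implies coe subset of maxROf
  have hpsub : ∀ E ∈ 𝓜.powerset, (↑E : Set (Submodule R R)) ⊆ maxROf J := by
    intro E hE
    rw [← h𝓜coe]
    exact_mod_cast Finset.mem_powerset.1 hE
  ------------------------------------------------------------------
  -- Step 1 : LHS as inclusion-exclusion sum over the powerset of 𝓜
  ------------------------------------------------------------------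
  have step1 : (Nat.card (classL x) : ℤ) =
      ∑ E ∈ 𝓜.powerset, (-1) ^ E.card * c (interIn J ↑E) := by
    have hcard2 : ∀ E ∈ 𝓜.powerset, c (interIn J ↑E) =
        ∑ y ∈ JF, if ∀ M ∈ E, y ∈ M then (1 : ℤ) else 0 := by
      intro E hE
      have h1 : (interIn J ↑E : Set R).toFinset = JF.filter (fun y => ∀ M ∈ E, y ∈ M) := by
        ext y
        simp only [Set.mem_toFinset, Finset.mem_filter, hJF, SetLike.mem_coe]
        rw [mem_interIn (hpsub E hE)]
        simp
      rw [hc]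
      simp only [h1, Finset.sum_boole]
    rw [Finset.sum_congr rfl (fun E hE => by rw [hcard2 E hE] :
      ∀ E ∈ 𝓜.powerset, (-1:ℤ) ^ E.card * c (interIn J ↑E)
        = (-1:ℤ) ^ E.card * ∑ y ∈ JF, if ∀ M ∈ E, y ∈ M then (1:ℤ) else 0)]
    simp_rw [Finset.mul_sum]
    rw [Finset.sum_comm]
    have inner : ∀ y : R,
        ∑ E ∈ 𝓜.powerset, (-1) ^ E.card * (if ∀ M ∈ E, y ∈ M then (1 : ℤ) else 0)
          = if ∀ M ∈ 𝓜, y ∉ M then 1 else 0 := by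
      intro y
      have hterm : ∀ E : Finset (Submodule R R),
          (-1 : ℤ) ^ E.card * (if ∀ M ∈ E, y ∈ M then (1 : ℤ) else 0)
            = ∏ M ∈ E, (if y ∈ M then (-1 : ℤ) else 0) := by
        intro E
        by_cases h : ∀ M ∈ E, y ∈ M
        · rw [if_pos h, mul_one, Finset.prod_congr rfl (fun M hM => if_pos (h M hM)),
            Finset.prod_const]
        · push_neg at h
          obtain ⟨M, hM, hyM⟩ := h
          rw [if_neg (by push_neg; exact ⟨M, hM, hyM⟩), mul_zero]
          exact (Finset.prod_eq_zero hM
            (if_neg hyM : (if y ∈ M then (-1 : ℤ) else 0) = 0)).symm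
      simp_rw [hterm]
      have h3 := Finset.prod_add (fun M : Submodule R R => if y ∈ M then (-1 : ℤ) else 0)
        (fun _ => 1) 𝓜
      simp only [Finset.prod_const_one, mul_one] at h3
      rw [← h3]
      have h2 : ∀ M ∈ 𝓜, ((if y ∈ M then (-1 : ℤ) else 0) + 1)
          = (if y ∈ M then 0 else 1) := by
        intro M _; split_ifs <;> ring
      rw [Finset.prod_congr rfl h2]
      by_cases h : ∀ M ∈ 𝓜, y ∉ M
      · rw [if_pos h, Finset.prod_congr rfl (fun M hM => if_neg (h M hM)),
          Finset.prod_const_one]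
      · push_neg at h
        obtain ⟨M, hM, hyM⟩ := h
        rw [if_neg (by push_neg; exact ⟨M, hM, hyM⟩)]
        exact Finset.prod_eq_zero hM (if_pos hyM : (if y ∈ M then (0:ℤ) else 1) = 0)
    rw [Finset.sum_congr rfl (fun y _ => inner y), Finset.sum_boole]
    have e1 : (classL x).toFinset = JF.filter (fun y => ∀ M ∈ 𝓜, y ∉ M) := by
      ext y
      simp only [Set.mem_toFinset, Finset.mem_filter, hJF, SetLike.mem_coe]
      rw [classL_eq x]
      simp only [Set.mem_setOf_eq, ← hJ]
      constructor
      · rintro ⟨h1, h2⟩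
        exact ⟨h1, fun M hM => h2 M (Set.mem_toFinset.1 hM)⟩
      · rintro ⟨h1, h2⟩
        exact ⟨h1, fun M hM => h2 M (Set.mem_toFinset.2 hM)⟩
    rw [Nat.card_eq_card_toFinset, e1]
  ------------------------------------------------------------------
  -- Step 2 : RHS as the same sum
  ------------------------------------------------------------------
  set S : Finset (Submodule R R) := Finset.univ.filter (fun I => I ≤ J) with hS
  have hsetS : {I : Submodule R R | I ≤ lgen x} = ↑S := by
    ext I; simp [hS, ← hJ]
  rw [hsetS, finsum_mem_coe_finset]
  -- fiberwise grouping of the powerset sum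
  have hmaps : ∀ E ∈ 𝓜.powerset, interIn J ↑E ∈ S := by
    intro E hE
    simp only [hS, Finset.mem_filter, Finset.mem_univ, true_and]
    by_cases h : (↑E : Set (Submodule R R)) = ∅
    · rw [interIn, if_pos h]
    · exact (interIn_lt (hpsub E hE)
        (Set.nonempty_iff_ne_empty.2 h)).le
  rw [step1,
    ← Finset.sum_fiberwise_of_maps_to hmaps (fun E => (-1 : ℤ) ^ E.card * c (interIn J ↑E))]
  refine Finset.sum_congr rfl ?_
  intro I hIS
  have hIJ : I ≤ J := by simpa [hS] using hIS
  set fib : Finset (Finset (Submodule R R)) :=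
    (𝓜.powerset.filter fun E => interIn J ↑E = I) with hfib
  -- inner sum over the fiber
  have hfibsum : ∑ E ∈ fib, (-1 : ℤ) ^ E.card * c (interIn J ↑E)
      = ((fib.filter fun E => Even E.card).card : ℤ)
        * c I - ((fib.filter fun E => Odd E.card).card : ℤ) * c I := by
    have : ∀ E ∈ fib, (-1 : ℤ) ^ E.card * c (interIn J ↑E)
        = (-1 : ℤ) ^ E.card * c I := by
      intro E hE
      rw [(Finset.mem_filter.1 hE).2]
    rw [Finset.sum_congr rfl this,
      ← Finset.sum_filter_add_sum_filter_not fib (fun E => Even E.card)]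
    have he : ∀ E ∈ fib.filter (fun E => Even E.card),
        (-1 : ℤ) ^ E.card * c I = c I := by
      intro E hE
      rw [((Finset.mem_filter.1 hE).2).neg_one_pow, one_mul]
    have ho : ∀ E ∈ fib.filter (fun E => ¬ Even E.card),
        (-1 : ℤ) ^ E.card * c I = -c I := by
      intro E hE
      rw [(Nat.not_even_iff_odd.1 (Finset.mem_filter.1 hE).2).neg_one_pow, neg_one_mul]
    rw [Finset.sum_congr rfl he, Finset.sum_congr rfl ho, Finset.sum_const,
      Finset.sum_const]
    have : fib.filter (fun E => ¬ Even E.card) = fib.filter (fun E => Odd E.card) := by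
      apply Finset.filter_congr; intro E _; rw [Nat.not_even_iff_odd]
    rw [this]
    push_cast
    ring
  rw [hfibsum, hcard I]
  by_cases hIeq : I = J
  · -- fiber is {∅}
    subst hIeq
    have hfibeq : fib = {∅} := by
      ext E
      simp only [hfib, Finset.mem_filter, Finset.mem_powerset, Finset.mem_singleton]
      constructor
      · rintro ⟨hE, hint⟩
        by_contra hEne
        have hne : (↑E : Set (Submodule R R)).Nonempty := by
          rw [Finset.coe_nonempty]
          exact Finset.nonempty_iff_ne_empty.2 hEne
        exact (interIn_lt (hpsub E (Finset.mem_powerset.2 hE)) hne).ne hint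
      · rintro rfl
        refine ⟨Finset.empty_subset _, ?_⟩
        rw [Finset.coe_empty, interIn, if_pos rfl]
    rw [hfibeq]
    have h0 : ({∅} : Finset (Finset (Submodule R R))).filter (fun E => Even E.card)
        = {∅} := by
      ext E; simp +contextual [Finset.mem_filter]
    have h1 : ({∅} : Finset (Finset (Submodule R R))).filter (fun E => Odd E.card)
        = ∅ := by
      ext E
      simp +contextual [Finset.mem_filter]
    rw [h0, h1]
    unfold muR
    rw [if_pos rfl]
    simp [mul_comm]
  · -- I < J : relate muR to the fiber counts
    have hIlt : I < J := lt_of_le_of_ne hIJ hIeq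
    have hcount : ∀ (p : ℕ → Prop),
        Nat.card {E : Set (Submodule R R) //
            E ⊆ maxROf J ∧ interIn J E = I ∧ p (Nat.card E)}
          = (fib.filter fun E => p E.card).card := by
      intro p
      have hfil : 𝓜.powerset.filter (fun F : Finset (Submodule R R) =>
            interIn J (↑F : Set (Submodule R R)) = I ∧ p (Nat.card (↑F : Set (Submodule R R))))
          = fib.filter (fun E => p E.card) := by
        rw [hfib, Finset.filter_filter]
        apply Finset.filter_congr
        intro E _
        simp only [Nat.card_coe_set_eq, Set.ncard_coe_finset]
      have hcs := card_subsets 𝓜 (fun E => interIn J E = I ∧ p (Nat.card E))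
      rw [h𝓜coe] at hcs
      refine hcs.trans ?_
      rw [← hfil]
      congr 1
      congr!
    by_cases hex : ∃ E : Set (Submodule R R),
        E ⊆ maxROf J ∧ E.Nonempty ∧ interIn J E = I
    · have hcountE : (Nat.card {E : Set (Submodule R R) //
            E ⊆ maxROf J ∧ interIn J E = I ∧ Even (Nat.card E)} : ℤ)
          = ((fib.filter (fun E => Even E.card)).card : ℤ) := by
        rw [hcount (fun n => Even n)]
        norm_cast
        congr 1
        congr!
      have hcountO : (Nat.card {E : Set (Submodule R R) //
            E ⊆ maxROf J ∧ interIn J E = I ∧ Odd (Nat.card E)} : ℤ)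
          = ((fib.filter (fun E => Odd E.card)).card : ℤ) := by
        rw [hcount (fun n => Odd n)]
        norm_cast
        congr 1
        congr!
      unfold muR
      rw [if_neg hIeq, if_pos ⟨hIlt, hex⟩, hcountE, hcountO]
      ring
    · -- fiber is empty
      have hfibe : fib = ∅ := by
        rw [Finset.eq_empty_iff_forall_notMem]
        intro E hE
        rcases Finset.mem_filter.1 hE with ⟨hE1, hE2⟩
        apply hex
        refine ⟨↑E, hpsub E hE1, ?_, hE2⟩
        rw [Finset.coe_nonempty]
        rcases Finset.eq_empty_or_nonempty E with rfl | h
        · exfalso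
          apply hIeq
          rw [← hE2, Finset.coe_empty, interIn, if_pos rfl]
        · exact h
      unfold muR
      rw [if_neg hIeq, if_neg (by rintro ⟨-, h⟩; exact hex h), hfibe]
      simp
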